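/- The maximal number of cyclic triads in a tournament on n vertices is (n^3 - n)/24 if n is odd and (n^3 - 4n)/24 if n is even. -/

import Mathlib

def IsTournament {V : Type*} (r : V → V → Prop) : Prop :=
  (∀ v : V, ¬ r v v) ∧ ∀ u v : V, u ≠ v → (r u v ↔ ¬ r v u)

def CyclicTriad {V : Type*} (r : V → V → Prop) (t : Finset V) : Prop :=
  t.card = 3 ∧ ∃ a ∈ t, ∃ b ∈ t, ∃ c ∈ t,
    a ≠ b ∧ b ≠ c ∧ a ≠ c ∧ r a b ∧ r b c ∧ r c a

noncomputable def cyclicTriadCount {V : Type*} (r : V → V → Prop) : ℕ :=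
  {t : Finset V | CyclicTriad r t}.ncard

open Finset

open scoped Classical in
noncomputable def KBSdeg {n : ℕ} (T : Fin n → Fin n → Prop) (v : Fin n) : ℕ :=
  (univ.filter (fun w => T v w)).card

section
variable {n : ℕ} {T : Fin n → Fin n → Prop}

lemma KBS.sq_sub (k : ℕ) : k * k - k = k * (k - 1) := by
  cases k with
  | zero => rfl
  | succ m => rw [Nat.succ_sub_one, Nat.mul_succ, Nat.add_sub_cancel]

lemma KBS.asymm (hT : IsTournament T) {a b : Fin n} (h : T a b) : ¬ T b a := by
  rcases eq_or_ne a b with rfl | hne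
  · exact absurd h (hT.1 a)
  · exact fun h' => ((hT.2 a b hne).mp h) h'

lemma KBS.ne (hT : IsTournament T) {a b : Fin n} (h : T a b) : a ≠ b := by
  rintro rfl; exact hT.1 a h

open scoped Classical in
lemma KBS.sum_deg (hT : IsTournament T) : 2 * ∑ v, KBSdeg T v = n * (n - 1) := by
  classical
  set E : Finset (Fin n × Fin n) := univ.filter (fun p => T p.1 p.2) with hE
  have hcard : E.card = ∑ v, KBSdeg T v := by
    rw [card_eq_sum_card_fiberwise (f := Prod.fst) (t := univ) (fun x _ => mem_univ _)]
    refine Finset.sum_congr rfl fun v _ => ?_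
    rw [KBSdeg]
    apply card_nbij' (i := Prod.snd) (j := fun w => (v, w))
    · intro p hp
      simp only [mem_coe, hE, mem_filter, mem_univ, true_and] at hp ⊢
      obtain ⟨h1, h2⟩ := hp; rwa [← h2]
    · intro w hw
      simp only [mem_coe, mem_filter] at hw
      simp only [mem_coe, hE, mem_filter]
      exact ⟨⟨mem_univ _, hw.2⟩, trivial⟩
    · intro p hp
      simp only [mem_coe, hE, mem_filter] at hp
      exact Prod.ext hp.2.symm rfl
    · intro w hw; rfl
  have hswap : E.card = (univ.filter (fun p : Fin n × Fin n => T p.2 p.1)).card := by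
    apply card_nbij' (i := Prod.swap) (j := Prod.swap) <;> simp [hE, Set.MapsTo, Set.LeftInvOn, Set.RightInvOn]
  have hunion : (univ.filter (fun p : Fin n × Fin n => T p.1 p.2)) ∪
      (univ.filter (fun p : Fin n × Fin n => T p.2 p.1)) = (univ : Finset (Fin n)).offDiag := by
    ext p
    simp only [mem_union, mem_filter, mem_univ, true_and, mem_offDiag]
    constructor
    · rintro (h | h)
      · exact KBS.ne hT h
      · exact (KBS.ne hT h).symm
    · intro hne
      by_cases h : T p.1 p.2
      · exact Or.inl h
      · exact Or.inr ((hT.2 p.2 p.1 (Ne.symm hne)).mpr h)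
  have hdisj : Disjoint (univ.filter (fun p : Fin n × Fin n => T p.1 p.2))
      (univ.filter (fun p : Fin n × Fin n => T p.2 p.1)) := by
    rw [Finset.disjoint_filter]
    intro p _ h1 h2
    exact KBS.asymm hT h1 h2
  have := Finset.card_union_of_disjoint hdisj
  rw [hunion] at this
  have hoff : (univ : Finset (Fin n)).offDiag.card = n * n - n := by
    rw [offDiag_card]; simp
  have h2 : 2 * E.card = n * n - n := by
    rw [two_mul]
    rw [hoff] at this
    rw [hE] at hswap ⊢
    omega
  rw [← hcard, h2, Nat.mul_sub_one]

open scoped Classical in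
lemma KBS.B_card :
    (univ.filter (fun p : Fin n × Fin n × Fin n => T p.1 p.2.1 ∧ T p.1 p.2.2 ∧ p.2.1 ≠ p.2.2)).card
      = ∑ v, KBSdeg T v * (KBSdeg T v - 1) := by
  classical
  rw [card_eq_sum_card_fiberwise (f := Prod.fst) (t := univ) (fun x _ => mem_univ _)]
  refine Finset.sum_congr rfl fun v _ => ?_
  have : ((univ.filter (fun w => T v w))).offDiag.card = KBSdeg T v * (KBSdeg T v - 1) := by
    rw [offDiag_card, KBSdeg, Nat.mul_sub_one]
  rw [← this]
  apply card_nbij' (i := fun p => (p.2.1, p.2.2)) (j := fun q => (v, q.1, q.2))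
  · intro p hp
    simp only [mem_coe, mem_filter, mem_univ, true_and, mem_offDiag] at hp ⊢
    obtain ⟨⟨h1, h2, h3⟩, h4⟩ := hp
    subst h4
    exact ⟨by simpa using h1, by simpa using h2, h3⟩
  · intro q hq
    simp only [mem_coe, mem_offDiag, mem_filter, mem_univ, true_and, and_true] at hq ⊢
    exact ⟨hq.1, hq.2.1, hq.2.2⟩
  · intro p hp
    simp only [mem_coe, mem_filter] at hp
    obtain ⟨-, h4⟩ := hp
    subst h4; rfl
  · intro q hq; rfl

open scoped Classical in
lemma KBS.D_card :
    (univ.filter (fun p : Fin n × Fin n × Fin n => p.1 ≠ p.2.1 ∧ p.1 ≠ p.2.2 ∧ p.2.1 ≠ p.2.2)).card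
      = n * ((n - 1) * (n - 2)) := by
  classical
  rw [card_eq_sum_card_fiberwise (f := Prod.fst) (t := univ) (fun x _ => mem_univ _)]
  have hfib : ∀ v : Fin n, ((univ.filter (fun p : Fin n × Fin n × Fin n => p.1 ≠ p.2.1 ∧ p.1 ≠ p.2.2 ∧ p.2.1 ≠ p.2.2)).filter (fun x => x.1 = v)).card = (n - 1) * (n - 2) := by
    intro v
    have hcard : ((univ.erase v)).offDiag.card = (n - 1) * (n - 2) := by
      have hs : (univ.erase v).card = n - 1 := by
        rw [card_erase_of_mem (mem_univ v)]; simp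
      rw [offDiag_card, hs, KBS.sq_sub]
      congr 1
    rw [← hcard]
    apply card_nbij' (i := fun p => (p.2.1, p.2.2)) (j := fun q => (v, q.1, q.2))
    · intro p hp
      simp only [mem_coe, mem_filter, mem_univ, true_and, mem_offDiag, mem_erase] at hp ⊢
      obtain ⟨⟨h1, h2, h3⟩, h4⟩ := hp
      subst h4
      exact ⟨⟨Ne.symm h1, trivial⟩, ⟨Ne.symm h2, trivial⟩, h3⟩
    · intro q hq
      simp only [mem_coe, mem_offDiag, mem_erase, mem_filter, mem_univ, true_and, and_true] at hq ⊢
      exact ⟨Ne.symm hq.1, Ne.symm hq.2.1, hq.2.2⟩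
    · intro p hp
      simp only [mem_coe, mem_filter] at hp
      obtain ⟨-, h4⟩ := hp
      subst h4; rfl
    · intro q hq; rfl
  rw [Finset.sum_congr rfl (fun v _ => hfib v)]
  simp [card_univ, mul_comm]
open scoped Classical in
lemma KBS.partition (hT : IsTournament T) :
    (univ.filter (fun p : Fin n × Fin n × Fin n => p.1 ≠ p.2.1 ∧ p.1 ≠ p.2.2 ∧ p.2.1 ≠ p.2.2)).card
      = 2 * (univ.filter (fun p : Fin n × Fin n × Fin n => T p.1 p.2.1 ∧ T p.2.1 p.2.2 ∧ T p.2.2 p.1)).card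
      + 3 * (univ.filter (fun p : Fin n × Fin n × Fin n => T p.1 p.2.1 ∧ T p.1 p.2.2 ∧ p.2.1 ≠ p.2.2)).card := by
  classical
  have hne : ∀ {x y : Fin n}, T x y → x ≠ y := fun hxy => KBS.ne hT hxy
  have hasym : ∀ {x y : Fin n}, T x y → ¬ T y x := fun hxy => KBS.asymm hT hxy
  have hcover : (univ.filter (fun p : Fin n × Fin n × Fin n => p.1 ≠ p.2.1 ∧ p.1 ≠ p.2.2 ∧ p.2.1 ≠ p.2.2))
      = ((((univ.filter (fun p : Fin n × Fin n × Fin n => T p.1 p.2.1 ∧ T p.2.1 p.2.2 ∧ T p.2.2 p.1))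
        ∪ (univ.filter (fun p : Fin n × Fin n × Fin n => T p.2.1 p.1 ∧ T p.2.2 p.2.1 ∧ T p.1 p.2.2)))
        ∪ (univ.filter (fun p : Fin n × Fin n × Fin n => T p.1 p.2.1 ∧ T p.1 p.2.2 ∧ p.2.1 ≠ p.2.2)))
        ∪ (univ.filter (fun p : Fin n × Fin n × Fin n => T p.2.1 p.1 ∧ T p.2.1 p.2.2 ∧ p.1 ≠ p.2.2)))
        ∪ (univ.filter (fun p : Fin n × Fin n × Fin n => T p.2.2 p.1 ∧ T p.2.2 p.2.1 ∧ p.1 ≠ p.2.1)) := by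
    ext ⟨a, b, c⟩
    simp only [mem_union, mem_filter, mem_univ, true_and]
    constructor
    · rintro ⟨h1, h2, h3⟩
      have e1 := hT.2 a b h1
      have e2 := hT.2 b c h3
      have e3 := hT.2 a c h2
      by_cases t1 : T a b <;> by_cases t2 : T b c <;> by_cases t3 : T a c <;> tauto
    · rintro ((((⟨x1, x2, x3⟩ | ⟨x1, x2, x3⟩) | ⟨x1, x2, x3⟩) | ⟨x1, x2, x3⟩) | ⟨x1, x2, x3⟩)
      · exact ⟨hne x1, Ne.symm (hne x3), hne x2⟩
      · exact ⟨Ne.symm (hne x1), hne x3, Ne.symm (hne x2)⟩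
      · exact ⟨hne x1, hne x2, x3⟩
      · exact ⟨Ne.symm (hne x1), x3, hne x2⟩
      · exact ⟨x3, Ne.symm (hne x1), Ne.symm (hne x2)⟩
  rw [hcover]
  have dj : ∀ (P Q : Fin n × Fin n × Fin n → Prop) [DecidablePred P] [DecidablePred Q],
      (∀ p, P p → Q p → False) → Disjoint (univ.filter P) (univ.filter Q) := by
    intro P Q _ _ h
    rw [Finset.disjoint_filter]
    exact fun p _ hp hq => h p hp hq
  rw [card_union_of_disjoint, card_union_of_disjoint, card_union_of_disjoint,
      card_union_of_disjoint]
  · have hAA' : (univ.filter (fun p : Fin n × Fin n × Fin n => T p.2.1 p.1 ∧ T p.2.2 p.2.1 ∧ T p.1 p.2.2)).card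
        = (univ.filter (fun p : Fin n × Fin n × Fin n => T p.1 p.2.1 ∧ T p.2.1 p.2.2 ∧ T p.2.2 p.1)).card := by
      apply card_nbij' (i := fun p => (p.1, p.2.2, p.2.1)) (j := fun p => (p.1, p.2.2, p.2.1)) <;>
        simp only [Set.MapsTo, Set.LeftInvOn, Set.RightInvOn, mem_coe, mem_filter, mem_univ, true_and] <;> intro p hp <;> tauto
    have hBB' : (univ.filter (fun p : Fin n × Fin n × Fin n => T p.2.1 p.1 ∧ T p.2.1 p.2.2 ∧ p.1 ≠ p.2.2)).card
        = (univ.filter (fun p : Fin n × Fin n × Fin n => T p.1 p.2.1 ∧ T p.1 p.2.2 ∧ p.2.1 ≠ p.2.2)).card := by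
      apply card_nbij' (i := fun p => (p.2.1, p.1, p.2.2)) (j := fun p => (p.2.1, p.1, p.2.2)) <;>
        simp only [Set.MapsTo, Set.LeftInvOn, Set.RightInvOn, mem_coe, mem_filter, mem_univ, true_and] <;> intro p hp <;> tauto
    have hBB'' : (univ.filter (fun p : Fin n × Fin n × Fin n => T p.2.2 p.1 ∧ T p.2.2 p.2.1 ∧ p.1 ≠ p.2.1)).card
        = (univ.filter (fun p : Fin n × Fin n × Fin n => T p.1 p.2.1 ∧ T p.1 p.2.2 ∧ p.2.1 ≠ p.2.2)).card := by
      apply card_nbij' (i := fun p => (p.2.2, p.2.1, p.1)) (j := fun p => (p.2.2, p.2.1, p.1)) <;>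
        simp only [Set.MapsTo, Set.LeftInvOn, Set.RightInvOn, mem_coe, mem_filter, mem_univ, true_and] <;> intro p hp <;> tauto
    rw [hAA', hBB', hBB'']
    ring
  all_goals try simp only [Finset.disjoint_union_left]
  all_goals repeat' apply And.intro
  all_goals
    apply dj
    rintro ⟨a, b, c⟩ h1 h2
    dsimp only at h1 h2
    have A1 : ¬(T a b ∧ T b a) := fun h => hasym h.1 h.2
    have A2 : ¬(T b c ∧ T c b) := fun h => hasym h.1 h.2
    have A3 : ¬(T a c ∧ T c a) := fun h => hasym h.1 h.2
    tauto
open scoped Classical in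
lemma KBS.count_eq : cyclicTriadCount T = (univ.filter (fun t : Finset (Fin n) => CyclicTriad T t)).card := by
  classical
  have h : {t : Finset (Fin n) | CyclicTriad T t} = ↑(univ.filter (fun t : Finset (Fin n) => CyclicTriad T t)) := by
    ext t; simp
  rw [cyclicTriadCount, h, Set.ncard_coe_finset]

open scoped Classical in
lemma KBS.A_card (hT : IsTournament T) :
    (univ.filter (fun p : Fin n × Fin n × Fin n => T p.1 p.2.1 ∧ T p.2.1 p.2.2 ∧ T p.2.2 p.1)).card
      = 3 * cyclicTriadCount T := by
  classical
  rw [KBS.count_eq]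
  have hmem : ∀ p ∈ (univ.filter (fun p : Fin n × Fin n × Fin n => T p.1 p.2.1 ∧ T p.2.1 p.2.2 ∧ T p.2.2 p.1)),
      ({p.1, p.2.1, p.2.2} : Finset (Fin n)) ∈ (univ.filter (fun t : Finset (Fin n) => CyclicTriad T t)) := by
    rintro ⟨a, b, c⟩ hp
    simp only [mem_filter, mem_univ, true_and] at hp ⊢
    obtain ⟨h1, h2, h3⟩ := hp
    have hab : a ≠ b := KBS.ne hT h1
    have hbc : b ≠ c := KBS.ne hT h2
    have hac : a ≠ c := Ne.symm (KBS.ne hT h3)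
    refine ⟨?_, a, ?_, b, ?_, c, ?_, hab, hbc, hac, h1, h2, h3⟩
    · rw [card_insert_of_notMem (by simp [hab, hac]), card_insert_of_notMem (by simp [hbc]),
        card_singleton]
    · simp
    · simp
    · simp
  have hfibcard : ∀ t ∈ (univ.filter (fun t : Finset (Fin n) => CyclicTriad T t)),
      ((univ.filter (fun p : Fin n × Fin n × Fin n => T p.1 p.2.1 ∧ T p.2.1 p.2.2 ∧ T p.2.2 p.1)).filter
        (fun p => ({p.1, p.2.1, p.2.2} : Finset (Fin n)) = t)).card = 3 := by
    intro t ht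
    simp only [mem_filter, mem_univ, true_and] at ht
    obtain ⟨hcard3, a, ha, b, hb, c, hc, hab, hbc, hac, e1, e2, e3⟩ := ht
    have hsub : ({a, b, c} : Finset (Fin n)) ⊆ t := by
      intro x hx
      simp only [mem_insert, mem_singleton] at hx
      rcases hx with rfl | rfl | rfl <;> assumption
    have hc3 : ({a, b, c} : Finset (Fin n)).card = 3 := by
      rw [card_insert_of_notMem (by simp [hab, hac]), card_insert_of_notMem (by simp [hbc]),
        card_singleton]
    have ht_eq : ({a, b, c} : Finset (Fin n)) = t :=
      Finset.eq_of_subset_of_card_le hsub (by omega)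
    have hba : ¬ T b a := KBS.asymm hT e1
    have hcb : ¬ T c b := KBS.asymm hT e2
    have hac' : ¬ T a c := KBS.asymm hT e3
    have hfib : ((univ.filter (fun p : Fin n × Fin n × Fin n => T p.1 p.2.1 ∧ T p.2.1 p.2.2 ∧ T p.2.2 p.1)).filter
        (fun p => ({p.1, p.2.1, p.2.2} : Finset (Fin n)) = t))
        = ({(a, b, c), (b, c, a), (c, a, b)} : Finset (Fin n × Fin n × Fin n)) := by
      ext ⟨x, y, z⟩
      simp only [mem_filter, mem_univ, true_and, mem_insert, mem_singleton, Prod.mk.injEq]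
      constructor
      · rintro ⟨⟨f1, f2, f3⟩, hset⟩
        have hxy : x ≠ y := KBS.ne hT f1
        have hyz : y ≠ z := KBS.ne hT f2
        have hzx : z ≠ x := KBS.ne hT f3
        have hx : x ∈ ({a, b, c} : Finset (Fin n)) := by
          rw [ht_eq, ← hset]; simp
        have hy : y ∈ ({a, b, c} : Finset (Fin n)) := by
          rw [ht_eq, ← hset]; simp
        have hz : z ∈ ({a, b, c} : Finset (Fin n)) := by
          rw [ht_eq, ← hset]; simp
        simp only [mem_insert, mem_singleton] at hx hy hz
        rcases hx with rfl | rfl | rfl <;> rcases hy with rfl | rfl | rfl <;>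
          rcases hz with rfl | rfl | rfl <;> tauto
      · rintro (⟨rfl, rfl, rfl⟩ | ⟨rfl, rfl, rfl⟩ | ⟨rfl, rfl, rfl⟩)
        · refine ⟨⟨e1, e2, e3⟩, ht_eq⟩
        · refine ⟨⟨e2, e3, e1⟩, ?_⟩
          rw [← ht_eq]; ext w; simp; tauto
        · refine ⟨⟨e3, e1, e2⟩, ?_⟩
          rw [← ht_eq]; ext w; simp; tauto
    rw [hfib]
    rw [card_insert_of_notMem (by simp [Prod.ext_iff]; tauto),
      card_insert_of_notMem (by simp [Prod.ext_iff]; tauto), card_singleton]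
  rw [card_eq_sum_card_fiberwise hmem, Finset.sum_congr rfl hfibcard, Finset.sum_const,
    smul_eq_mul, mul_comm]
open scoped Classical in
lemma KBS.formula (hT : IsTournament T) :
    6 * cyclicTriadCount T + 3 * ∑ v, KBSdeg T v * (KBSdeg T v - 1) = n * ((n - 1) * (n - 2)) := by
  classical
  have h := KBS.partition hT
  rw [KBS.D_card, KBS.A_card hT, KBS.B_card] at h
  linarith

lemma KBS.cast3 (n : ℕ) : ((n * ((n - 1) * (n - 2)) : ℕ) : ℤ)
    = (n : ℤ) * (((n : ℤ) - 1) * ((n : ℤ) - 2)) := by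
  rcases n with _ | _ | m
  · simp
  · simp
  · have h1 : (m + 2) - 1 = m + 1 := by omega
    have h2 : (m + 2) - 2 = m := by omega
    rw [h1, h2]
    push_cast
    ring

lemma KBS.cast2 (n : ℕ) : ((n * (n - 1) : ℕ) : ℤ) = (n : ℤ) * ((n : ℤ) - 1) := by
  rcases n with _ | m
  · simp
  · have h1 : (m + 1) - 1 = m := by omega
    rw [h1]
    push_cast
    ring

lemma KBS.cast_deg (d : ℕ) : ((d * (d - 1) : ℕ) : ℤ) = (d : ℤ) * (d : ℤ) - d := by
  rcases Nat.eq_zero_or_pos d with rfl | hd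
  · simp
  · rw [← KBS.sq_sub, Nat.cast_sub (Nat.le_mul_of_pos_left d hd)]
    push_cast
    ring

open scoped Classical in
lemma KBS.upper (hT : IsTournament T) :
    24 * cyclicTriadCount T ≤ if Odd n then n ^ 3 - n else n ^ 3 - 4 * n := by
  classical
  set c := cyclicTriadCount T with hc
  set S1 := ∑ v, KBSdeg T v with hS1
  set S2 := ∑ v, KBSdeg T v * (KBSdeg T v - 1) with hS2
  have hf : 6 * c + 3 * S2 = n * ((n - 1) * (n - 2)) := KBS.formula hT
  have hs1 : 2 * S1 = n * (n - 1) := KBS.sum_deg hT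
  rcases Nat.eq_zero_or_pos n with rfl | hn
  · norm_num at hf ⊢
    omega
  -- cast master identities to ℤ
  have hfZ : 6 * (c : ℤ) + 3 * (S2 : ℤ) = (n : ℤ) * (((n : ℤ) - 1) * ((n : ℤ) - 2)) := by
    have h0 : ((6 * c + 3 * S2 : ℕ) : ℤ) = ((n * ((n - 1) * (n - 2)) : ℕ) : ℤ) := by rw [hf]
    rw [KBS.cast3] at h0
    push_cast at h0
    linarith
  have hs1Z : 2 * (S1 : ℤ) = (n : ℤ) * ((n : ℤ) - 1) := by
    have h0 : ((2 * S1 : ℕ) : ℤ) = ((n * (n - 1) : ℕ) : ℤ) := by rw [hs1]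
    rw [KBS.cast2] at h0
    push_cast at h0
    linarith
  have hS2Z : (S2 : ℤ) = ∑ v : Fin n, ((KBSdeg T v : ℤ) * (KBSdeg T v : ℤ) - (KBSdeg T v : ℤ)) := by
    rw [hS2, Nat.cast_sum]
    exact Finset.sum_congr rfl fun v _ => KBS.cast_deg _
  have hS1Zs : (S1 : ℤ) = ∑ v : Fin n, (KBSdeg T v : ℤ) := by
    rw [hS1, Nat.cast_sum]
  have expand : ∑ v : Fin n, (2 * (KBSdeg T v : ℤ) - ((n : ℤ) - 1)) ^ 2
      = 4 * (S2 : ℤ) + (4 - 4 * ((n : ℤ) - 1)) * (S1 : ℤ) + (n : ℤ) * ((n : ℤ) - 1) ^ 2 := by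
    rw [hS2Z, hS1Zs, Finset.mul_sum, Finset.mul_sum, ← Finset.sum_add_distrib]
    have : ∀ v ∈ (univ : Finset (Fin n)), (2 * (KBSdeg T v : ℤ) - ((n : ℤ) - 1)) ^ 2
        = (4 * ((KBSdeg T v : ℤ) * (KBSdeg T v : ℤ) - (KBSdeg T v : ℤ))
          + (4 - 4 * ((n : ℤ) - 1)) * (KBSdeg T v : ℤ)) + ((n : ℤ) - 1) ^ 2 := by
      intro v _; ring
    rw [Finset.sum_congr rfl this, Finset.sum_add_distrib, Finset.sum_const, card_univ,
      Fintype.card_fin, nsmul_eq_mul]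
  have hS1mul : (4 - 4 * ((n : ℤ) - 1)) * (S1 : ℤ)
      = (2 - 2 * ((n : ℤ) - 1)) * ((n : ℤ) * ((n : ℤ) - 1)) := by
    linear_combination (2 - 2 * ((n : ℤ) - 1)) * hs1Z
  by_cases hodd : Odd n
  · simp only [hodd, if_true]
    have hpos : (0 : ℤ) ≤ ∑ v : Fin n, (2 * (KBSdeg T v : ℤ) - ((n : ℤ) - 1)) ^ 2 :=
      Finset.sum_nonneg fun v _ => sq_nonneg _
    rw [expand] at hpos
    have hZ : 24 * (c : ℤ) ≤ (n : ℤ) ^ 3 - (n : ℤ) := by nlinarith [hfZ, hpos, hS1mul]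
    have hn3 : n ≤ n ^ 3 := Nat.le_self_pow (by norm_num) n
    have : ((24 * c : ℕ) : ℤ) ≤ ((n ^ 3 - n : ℕ) : ℤ) := by
      rw [Nat.cast_sub hn3]
      push_cast
      linarith
    exact_mod_cast this
  · simp only [hodd, if_false]
    have heven : Even n := Nat.not_odd_iff_even.mp hodd
    have hodd1 : ∀ v : Fin n, (1 : ℤ) ≤ (2 * (KBSdeg T v : ℤ) - ((n : ℤ) - 1)) ^ 2 := by
      intro v
      have ho : Odd (2 * (KBSdeg T v : ℤ) - ((n : ℤ) - 1)) := by
        have h1 : Even (2 * (KBSdeg T v : ℤ)) := even_two_mul _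
        have h2 : Odd ((n : ℤ) - 1) := by
          have he : Even (n : ℤ) := (Int.even_coe_nat n).mpr heven
          exact he.sub_odd odd_one
        exact h1.sub_odd h2
      have hne : (2 * (KBSdeg T v : ℤ) - ((n : ℤ) - 1)) ≠ 0 := by
        intro h0
        rw [h0] at ho
        simp at ho
      have habs := Int.one_le_abs hne
      nlinarith [sq_abs (2 * (KBSdeg T v : ℤ) - ((n : ℤ) - 1)), abs_nonneg (2 * (KBSdeg T v : ℤ) - ((n : ℤ) - 1))]
    have hpos : (n : ℤ) ≤ ∑ v : Fin n, (2 * (KBSdeg T v : ℤ) - ((n : ℤ) - 1)) ^ 2 := by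
      calc (n : ℤ) = ∑ _v : Fin n, (1 : ℤ) := by simp
        _ ≤ _ := Finset.sum_le_sum fun v _ => hodd1 v
    rw [expand] at hpos
    have hZ : 24 * (c : ℤ) ≤ (n : ℤ) ^ 3 - 4 * (n : ℤ) := by nlinarith [hfZ, hpos, hS1mul]
    have hn2 : 2 ≤ n := by
      rcases heven with ⟨m, rfl⟩
      omega
    have hn3 : 4 * n ≤ n ^ 3 := by nlinarith
    have : ((24 * c : ℕ) : ℤ) ≤ ((n ^ 3 - 4 * n : ℕ) : ℤ) := by
      rw [Nat.cast_sub hn3]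
      push_cast
      linarith
    exact_mod_cast this
def KBStc (n : ℕ) : Fin n → Fin n → Prop := fun i j =>
  (i.val < j.val ∧ 2 * (j.val - i.val) ≤ n) ∨ (j.val < i.val ∧ n < 2 * (i.val - j.val))

lemma KBStc_tournament : IsTournament (KBStc n) := by
  constructor
  · intro v
    simp only [KBStc]
    omega
  · intro u v huv
    have h : u.val ≠ v.val := fun h => huv (Fin.ext h)
    simp only [KBStc]
    omega

open scoped Classical in
lemma KBStc_deg (i : Fin n) :
    KBSdeg (KBStc n) i = if 2 * i.val < n then n / 2 else (n - 1) / 2 := by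
  classical
  have hn : 0 < n := i.pos
  rw [KBSdeg]
  have h1 : (univ.filter (fun j : Fin n => KBStc n i j)).card
      = ((range n).filter (fun k =>
          (i.val < k ∧ 2 * (k - i.val) ≤ n) ∨ (k < i.val ∧ n < 2 * (i.val - k)))).card := by
    apply card_nbij' (i := fun j => j.val) (j := fun k => ⟨k % n, Nat.mod_lt _ hn⟩)
    · intro j hj
      simp only [mem_coe, mem_filter, mem_univ, true_and, mem_range, KBStc] at hj ⊢
      exact ⟨j.isLt, by simpa using hj⟩
    · intro k hk
      simp only [mem_coe, mem_filter, mem_range] at hk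
      simp only [mem_coe, mem_filter, mem_univ, true_and, KBStc, Nat.mod_eq_of_lt hk.1]
      exact (@Finset.mem_filter _ _ (fun _ => Classical.propDecidable _) _ _).mpr ⟨mem_univ _, hk.2⟩
    · intro j _
      exact Fin.ext (Nat.mod_eq_of_lt j.isLt)
    · intro k hk
      simp only [mem_coe, mem_filter, mem_range] at hk
      exact Nat.mod_eq_of_lt hk.1
  rw [h1]
  have h2 : ((range n).filter (fun k =>
      (i.val < k ∧ 2 * (k - i.val) ≤ n) ∨ (k < i.val ∧ n < 2 * (i.val - k))))
      = Ico (i.val + 1) (min (i.val + n / 2 + 1) n) ∪ range (i.val - n / 2) := by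
    ext k
    simp only [mem_filter, mem_range, mem_union, mem_Ico]
    omega
  rw [h2, card_union_of_disjoint, Nat.card_Ico, card_range]
  · have hlt := i.isLt
    rcases Nat.lt_or_ge (2 * i.val) n with h | h
    · rw [if_pos h, min_eq_left (by omega)]
      omega
    · rw [if_neg (by omega), min_eq_right (by omega)]
      omega
  · rw [Finset.disjoint_left]
    intro k hk hk2
    simp only [mem_Ico, mem_range] at hk hk2
    omega

open scoped Classical in
lemma KBStc_S2 :
    ∑ v : Fin n, KBSdeg (KBStc n) v * (KBSdeg (KBStc n) v - 1)
      = (n + 1) / 2 * (n / 2 * (n / 2 - 1)) + (n - (n + 1) / 2) * ((n - 1) / 2 * ((n - 1) / 2 - 1)) := by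
  classical
  have hdeg : ∀ v : Fin n, KBSdeg (KBStc n) v * (KBSdeg (KBStc n) v - 1)
      = if 2 * v.val < n then n / 2 * (n / 2 - 1) else (n - 1) / 2 * ((n - 1) / 2 - 1) := by
    intro v
    rw [KBStc_deg]
    by_cases h : 2 * v.val < n <;> simp [h]
  rw [Finset.sum_congr rfl (fun v _ => hdeg v)]
  rw [Fin.sum_univ_eq_sum_range (fun k => if 2 * k < n then n / 2 * (n / 2 - 1) else (n - 1) / 2 * ((n - 1) / 2 - 1))]
  rw [Finset.sum_ite]
  have e1 : (range n).filter (fun k => 2 * k < n) = range ((n + 1) / 2) := by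
    ext k
    simp only [mem_filter, mem_range]
    omega
  have e2 : (range n).filter (fun k => ¬ 2 * k < n) = Ico ((n + 1) / 2) n := by
    ext k
    simp only [mem_filter, mem_range, mem_Ico]
    omega
  rw [e1, e2, Finset.sum_const, Finset.sum_const, card_range, Nat.card_Ico, smul_eq_mul, smul_eq_mul]

open scoped Classical in
lemma KBStc_count : cyclicTriadCount (KBStc n)
    = if Odd n then (n ^ 3 - n) / 24 else (n ^ 3 - 4 * n) / 24 := by
  classical
  have hf := KBS.formula (T := KBStc n) KBStc_tournament
  rw [KBStc_S2] at hf
  set c := cyclicTriadCount (KBStc n) with hc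
  rcases Nat.even_or_odd n with he | ho
  · obtain ⟨m, rfl⟩ := he
    have hnotodd : ¬ Odd (m + m) := by rw [Nat.odd_iff]; omega
    rw [if_neg hnotodd]
    rcases m with _ | _ | k
    · norm_num at hf ⊢
      omega
    · norm_num at hf ⊢
      omega
    · have e0 : k + 1 + 1 + (k + 1 + 1) = 2 * k + 4 := by omega
      rw [e0] at hf ⊢
      have d1 : (2 * k + 4 + 1) / 2 = k + 2 := by omega
      have d2 : (2 * k + 4) / 2 = k + 2 := by omega
      have d3 : (2 * k + 4 - 1) / 2 = k + 1 := by omega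
      rw [d1, d2, d3] at hf
      have d4 : 2 * k + 4 - (k + 2) = k + 2 := by omega
      have d5 : 2 * k + 4 - 1 = 2 * k + 3 := by omega
      have d6 : 2 * k + 4 - 2 = 2 * k + 2 := by omega
      have d7 : k + 2 - 1 = k + 1 := by omega
      have d8 : k + 1 - 1 = k := by omega
      rw [d4, d5, d6, d7, d8] at hf
      have h6 : 6 * c = 2 * (k + 2) * ((k + 1) * (k + 3)) := by linarith [hf]
      have h24 : (2 * k + 4) ^ 3 = 4 * (2 * k + 4) + 24 * c := by linarith [h6]
      rw [h24, Nat.add_sub_cancel_left, Nat.mul_div_cancel_left c (by norm_num : 0 < 24)]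
  · obtain ⟨m, rfl⟩ := ho
    have hodd : Odd (2 * m + 1) := ⟨m, rfl⟩
    rw [if_pos hodd]
    rcases m with _ | k
    · norm_num at hf ⊢
      omega
    · have e0 : 2 * (k + 1) + 1 = 2 * k + 3 := by omega
      rw [e0] at hf ⊢
      have d1 : (2 * k + 3 + 1) / 2 = k + 2 := by omega
      have d2 : (2 * k + 3) / 2 = k + 1 := by omega
      have d3 : (2 * k + 3 - 1) / 2 = k + 1 := by omega
      rw [d1, d2, d3] at hf
      have d4 : 2 * k + 3 - (k + 2) = k + 1 := by omega
      have d5 : 2 * k + 3 - 1 = 2 * k + 2 := by omega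
      have d6 : 2 * k + 3 - 2 = 2 * k + 1 := by omega
      have d8 : k + 1 - 1 = k := by omega
      rw [d4, d5, d6, d8] at hf
      have h6 : 6 * c = (2 * k + 3) * ((k + 1) * (k + 2)) := by linarith [hf]
      have h24 : (2 * k + 3) ^ 3 = (2 * k + 3) + 24 * c := by linarith [h6]
      rw [h24, Nat.add_sub_cancel_left, Nat.mul_div_cancel_left c (by norm_num : 0 < 24)]
end

theorem kendall_babington_smith (n : ℕ) :
    IsGreatest
      {k : ℕ | ∃ T : Fin n → Fin n → Prop, IsTournament T ∧ cyclicTriadCount T = k}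
      (if Odd n then (n ^ 3 - n) / 24 else (n ^ 3 - 4 * n) / 24) := by
  constructor
  · exact ⟨KBStc n, KBStc_tournament, KBStc_count⟩
  · rintro k ⟨T, hT, rfl⟩
    have h24 := KBS.upper hT
    by_cases hodd : Odd n
    · rw [if_pos hodd] at h24 ⊢
      rw [Nat.le_div_iff_mul_le (by norm_num : 0 < 24)]
      linarith
    · rw [if_neg hodd] at h24 ⊢
      rw [Nat.le_div_iff_mul_le (by norm_num : 0 < 24)]
      linarith
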